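/- Let M : Fin k → Fin l → ℝ be a Monge matrix. If a row r attains the column minimum of column j1 and also attains the column minimum of column j2, where j1 ≤ j2, then r attains the column minimum of every column j with j1 ≤ j ≤ j2. Consequently, the set of columns whose minimum is attained in row r is a (possibly empty) contiguous interval of columns. (Fact 4 of the paper.) -/
import Mathlib

/-- A rectangular Monge matrix. -/
def IsMonge {k l : ℕ} (M : Fin k → Fin l → ℝ) : Prop :=
  ∀ i1 i2 : Fin k, ∀ j1 j2 : Fin l, i1 ≤ i2 → j1 ≤ j2 →
    M i2 j1 + M i1 j2 ≤ M i1 j1 + M i2 j2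

/-- Row `r` attains the column minimum of column `c`. -/
def ColMinAt {k l : ℕ} (M : Fin k → Fin l → ℝ) (r : Fin k) (c : Fin l) : Prop :=
  ∀ i : Fin k, M r c ≤ M i c

/-- Fact 4: the set of columns whose minimum is attained in a given row `r`
is contiguous: if `r` attains the column minima of columns `j1 ≤ j2`, then
it attains the column minimum of every column in between. -/
theorem monge_colMin_contiguous {k l : ℕ} (M : Fin k → Fin l → ℝ)
    (hM : IsMonge M) (r : Fin k) (j1 j2 : Fin l) (h12 : j1 ≤ j2)
    (h1 : ColMinAt M r j1) (h2 : ColMinAt M r j2) :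
    ∀ j : Fin l, j1 ≤ j → j ≤ j2 → ColMinAt M r j := by
  intro j hj1 hj2 i
  rcases le_total i r with hir | hri
  · have hm := hM i r j j2 hir hj2
    have := h2 i
    linarith
  · have hm := hM r i j1 j hri hj1
    have := h1 i
    linarith
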